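/- Krausz's characterization: a simple graph G is a line graph (i.e., G ≅ L(H) for some graph H) if and only if the edge set of G can be partitioned into cliques such that every vertex of G lies in at most two of these cliques. -/

import Mathlib

open SimpleGraph

/-- The graph on `Fin n` whose edges are the pairs in the list `l`. -/
def graphOfList (n : ℕ) (l : List (ℕ × ℕ)) : SimpleGraph (Fin n) :=
  SimpleGraph.fromRel (fun i j => (i.val, j.val) ∈ l)

/-- The claw `K_{1,3}`. -/
def claw : SimpleGraph (Fin 1 ⊕ Fin 3) := completeBipartiteGraph (Fin 1) (Fin 3)

/-- The triangle `K₃`. -/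
def K3 : SimpleGraph (Fin 3) := ⊤

/-- The complete graph `K₄`. -/
def K4 : SimpleGraph (Fin 4) := ⊤

/-- The paw graph: the claw `K_{1,3}` plus an edge joining two leaves. -/
def paw : SimpleGraph (Fin 4) := graphOfList 4 [(0,1),(0,2),(0,3),(1,2)]

/-- The diamond `K₄ − e`. -/
def diamond : SimpleGraph (Fin 4) := graphOfList 4 [(0,1),(0,2),(1,2),(1,3),(2,3)]

/-- `G` is a line graph: it is isomorphic to `L(H)` for some simple graph `H`. -/
def IsLineGraph {V : Type} (G : SimpleGraph V) : Prop :=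
  ∃ (W : Type) (H : SimpleGraph W), Nonempty (G ≃g H.lineGraph)

/-- `G` has an induced subgraph isomorphic to `X`. -/
def HasInducedCopy {V W : Type} (G : SimpleGraph V) (X : SimpleGraph W) : Prop :=
  ∃ S : Set V, Nonempty (G.induce S ≃g X)

/-- `a`, `b`, `c` form a triangle of `G`. -/
def IsTriangleOf {V : Type} (G : SimpleGraph V) (a b c : V) : Prop :=
  G.Adj a b ∧ G.Adj a c ∧ G.Adj b c

/-- The triangle `{a,b,c}` of `G` is odd: some vertex of `G` is adjacent to an odd
number of its vertices. -/
def IsOddTriangle {V : Type} (G : SimpleGraph V) (a b c : V) : Prop :=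
  IsTriangleOf G a b c ∧ ∃ v, Odd ((({a, b, c} : Set V) ∩ {x | G.Adj v x}).ncard)

/-- The triangle `{a,b,c}` of `G` is even: every vertex of `G` adjacent to some vertex
of the triangle is adjacent to exactly two of its vertices. -/
def IsEvenTriangle {V : Type} (G : SimpleGraph V) (a b c : V) : Prop :=
  IsTriangleOf G a b c ∧
    ∀ v, (G.Adj v a ∨ G.Adj v b ∨ G.Adj v c) →
      (({a, b, c} : Set V) ∩ {x | G.Adj v x}).ncard = 2

/-- A Krausz partition (line partition) of `G`: a family of cliques such that every
edge of `G` lies in exactly one of them and every vertex lies in at most two of them. -/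
def IsLinePartition {V : Type} (G : SimpleGraph V) (P : Set (Set V)) : Prop :=
  (∀ C ∈ P, G.IsClique C) ∧
  (∀ u w, G.Adj u w → ∃! C, C ∈ P ∧ u ∈ C ∧ w ∈ C) ∧
  (∀ v : V, ∀ C₁ ∈ P, ∀ C₂ ∈ P, ∀ C₃ ∈ P,
      v ∈ C₁ → v ∈ C₂ → v ∈ C₃ → C₁ = C₂ ∨ C₁ = C₃ ∨ C₂ = C₃)

/-- Any three members of a `Sym2` contain a repeat. -/
lemma sym2_three {W : Type} (e : Sym2 W) (a b c : W)
    (ha : a ∈ e) (hb : b ∈ e) (hc : c ∈ e) : a = b ∨ a = c ∨ b = c := by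
  induction e using Sym2.ind with
  | _ x y =>
    rw [Sym2.mem_iff] at ha hb hc
    rcases ha with rfl | rfl <;> rcases hb with rfl | rfl <;> rcases hc with rfl | rfl <;> tauto

namespace KrauszAux

variable {V : Type} (P : Set (Set V))

/-- The set of cliques of `P` containing `u`. -/
def S (u : V) : Set (Set V) := {C | C ∈ P ∧ u ∈ C}

open Classical in
/-- The edge of the Krausz graph associated to a vertex `u` of `G`. -/
noncomputable def edgeOf (u : V) : Sym2 (Set V ⊕ V × Fin 2) :=
  if h : ∃ C D : Set V, C ∈ S P u ∧ D ∈ S P u ∧ C ≠ D then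
    s(Sum.inl h.choose, Sum.inl h.choose_spec.choose)
  else if h2 : ∃ C, C ∈ S P u then s(Sum.inl h2.choose, Sum.inr (u, 0))
  else s(Sum.inr (u, 0), Sum.inr (u, 1))

lemma sym2_cases {W : Type} (e : Sym2 W) : ∃ x y, e = s(x, y) := by
  induction e using Sym2.ind with
  | _ x y => exact ⟨x, y, rfl⟩

lemma edgeOf_not_isDiag (u : V) : ¬ (edgeOf P u).IsDiag := by
  rw [edgeOf]
  split_ifs with h h2
  · simp only [Sym2.mk_isDiag_iff, Sum.inl.injEq]
    exact h.choose_spec.choose_spec.2.2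
  · simp
  · simp

lemma mem_P_of_inl_mem {C : Set V} {u : V} (h : Sum.inl C ∈ edgeOf P u) :
    C ∈ P ∧ u ∈ C := by
  rw [edgeOf] at h
  split_ifs at h with h1 h2
  · rw [Sym2.mem_iff] at h
    rcases h with h | h
    · exact (Sum.inl_injective (by exact_mod_cast h)) ▸ h1.choose_spec.choose_spec.1
    · exact (Sum.inl_injective (by exact_mod_cast h)) ▸ h1.choose_spec.choose_spec.2.1
  · rw [Sym2.mem_iff] at h
    rcases h with h | h
    · exact (Sum.inl_injective (by exact_mod_cast h)) ▸ h2.choose_spec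
    · simp at h
  · rw [Sym2.mem_iff] at h
    rcases h with h | h <;> simp at h

lemma eq_of_inr_mem {x : V} {i : Fin 2} {u : V} (h : Sum.inr (x, i) ∈ edgeOf P u) :
    x = u := by
  rw [edgeOf] at h
  split_ifs at h with h1 h2 <;> rw [Sym2.mem_iff] at h <;>
    rcases h with h | h <;> simp_all

lemma inl_mem_edgeOf (hP2 : ∀ v : V, ∀ C₁ ∈ P, ∀ C₂ ∈ P, ∀ C₃ ∈ P,
      v ∈ C₁ → v ∈ C₂ → v ∈ C₃ → C₁ = C₂ ∨ C₁ = C₃ ∨ C₂ = C₃)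
    {C : Set V} {u : V} (hC : C ∈ P) (hu : u ∈ C) :
    Sum.inl C ∈ edgeOf P u := by
  rw [edgeOf]
  split_ifs with h1 h2
  · have hC1 := h1.choose_spec.choose_spec.1
    have hD1 := h1.choose_spec.choose_spec.2.1
    have hne := h1.choose_spec.choose_spec.2.2
    rcases hP2 u C hC h1.choose hC1.1 h1.choose_spec.choose hD1.1 hu hC1.2 hD1.2 with
      h | h | h
    · rw [Sym2.mem_iff]; left; exact congrArg Sum.inl h
    · rw [Sym2.mem_iff]; right; exact congrArg Sum.inl h
    · exact absurd h hne
  · have : C = h2.choose := by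
      by_contra hne
      exact h1 ⟨C, h2.choose, ⟨hC, hu⟩, h2.choose_spec, hne⟩
    rw [Sym2.mem_iff]; left; exact congrArg Sum.inl this
  · exact absurd ⟨C, hC, hu⟩ h2

/-- The Krausz graph associated to a partition. -/
def H : SimpleGraph (Set V ⊕ V × Fin 2) where
  Adj x y := x ≠ y ∧ ∃ u, edgeOf P u = s(x, y)
  symm := by
    refine ⟨?_⟩
    rintro x y ⟨h, u, hu⟩
    exact ⟨h.symm, u, by rw [hu, Sym2.eq_swap]⟩
  loopless := ⟨fun x h => h.1 rfl⟩

lemma edgeOf_mem_edgeSet (u : V) : edgeOf P u ∈ (H P).edgeSet := by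
  have hd := edgeOf_not_isDiag P u
  obtain ⟨x, y, hmem⟩ := sym2_cases (edgeOf P u)
  rw [hmem, SimpleGraph.mem_edgeSet]
  refine ⟨fun hxy => ?_, u, hmem⟩
  rw [hmem] at hd
  exact hd (by simp [hxy])

variable {G : SimpleGraph V}

lemma edgeOf_injective (hP : IsLinePartition G P) :
    Function.Injective (edgeOf P) := by
  intro u v h
  by_contra hne
  -- If the common edge contains an inr vertex, its first component is both u and v.
  by_cases hinr : ∃ x i, Sum.inr (x, i) ∈ edgeOf P u
  · obtain ⟨x, i, hx⟩ := hinr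
    have h1 := eq_of_inr_mem P hx
    have h2 := eq_of_inr_mem P (h ▸ hx)
    exact hne (h1 ▸ h2.symm ▸ rfl)
  · -- both components are inl cliques, distinct, each containing u and v
    obtain ⟨a, b, hrep⟩ := sym2_cases (edgeOf P u)
    match a, b with
    | Sum.inr (x, i), _ => exact hinr ⟨x, i, by rw [hrep]; simp⟩
    | Sum.inl C, Sum.inr (x, i) => exact hinr ⟨x, i, by rw [hrep]; simp⟩
    | Sum.inl C, Sum.inl D =>
      have hCmem : Sum.inl C ∈ edgeOf P u := by rw [hrep]; simp
      have hDmem : Sum.inl D ∈ edgeOf P u := by rw [hrep]; simp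
      have hCD : C ≠ D := by
        intro heq
        have := edgeOf_not_isDiag P u
        rw [hrep, heq] at this
        exact this (by simp)
      obtain ⟨hCP, huC⟩ := mem_P_of_inl_mem P hCmem
      obtain ⟨hDP, huD⟩ := mem_P_of_inl_mem P hDmem
      obtain ⟨hCP', hvC⟩ := mem_P_of_inl_mem P (h ▸ hCmem)
      obtain ⟨hDP', hvD⟩ := mem_P_of_inl_mem P (h ▸ hDmem)
      have hadj : G.Adj u v := hP.1 C hCP huC hvC hne
      obtain ⟨Q, _, hQu⟩ := hP.2.1 u v hadj
      exact hCD ((hQu C ⟨hCP, huC, hvC⟩).trans (hQu D ⟨hDP, huD, hvD⟩).symm)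

noncomputable def toEdge (u : V) : (H P).edgeSet := ⟨edgeOf P u, edgeOf_mem_edgeSet P u⟩

lemma toEdge_bijective (hP : IsLinePartition G P) :
    Function.Bijective (toEdge P) := by
  constructor
  · intro u v h
    exact edgeOf_injective P hP (congrArg Subtype.val h)
  · rintro ⟨e, he⟩
    induction e using Sym2.ind with
    | _ x y =>
      rw [SimpleGraph.mem_edgeSet] at he
      obtain ⟨-, u, hu⟩ := he
      exact ⟨u, Subtype.ext hu⟩

noncomputable def krauszIso (hP : IsLinePartition G P) : G ≃g (H P).lineGraph where
  toEquiv := Equiv.ofBijective (toEdge P) (toEdge_bijective P hP)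
  map_rel_iff' := by
    intro u v
    simp only [Equiv.ofBijective_apply]
    rw [SimpleGraph.lineGraph_adj_iff_exists]
    constructor
    · rintro ⟨hne, w, hw1, hw2⟩
      match w with
      | Sum.inr (x, i) =>
        exact absurd ((eq_of_inr_mem P hw1).symm.trans (eq_of_inr_mem P hw2))
          (fun h => hne (congrArg (toEdge P) h))
      | Sum.inl C =>
        obtain ⟨hCP, huC⟩ := mem_P_of_inl_mem P hw1
        obtain ⟨_, hvC⟩ := mem_P_of_inl_mem P hw2
        exact hP.1 C hCP huC hvC (fun h => hne (congrArg (toEdge P) h))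
    · intro hadj
      obtain ⟨C, ⟨hCP, huC, hvC⟩, _⟩ := hP.2.1 u v hadj
      refine ⟨fun h => G.ne_of_adj hadj (edgeOf_injective P hP (congrArg Subtype.val h)), ?_⟩
      exact ⟨Sum.inl C, inl_mem_edgeOf P hP.2.2 hCP huC, inl_mem_edgeOf P hP.2.2 hCP hvC⟩

end KrauszAux

/-- Krausz's characterization of line graphs. -/
theorem krausz_characterization {V : Type} (G : SimpleGraph V) :
    IsLineGraph G ↔ ∃ P : Set (Set V), IsLinePartition G P := by
  constructor
  · rintro ⟨W, H, ⟨f⟩⟩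
    refine ⟨{C | ∃ w : W, C = {v : V | w ∈ ((f v : H.edgeSet) : Sym2 W)}}, ?_, ?_, ?_⟩
    · rintro C ⟨w, rfl⟩ u hu v hv hne
      have hfne : f u ≠ f v := fun h => hne (f.toEquiv.injective h)
      have : H.lineGraph.Adj (f u) (f v) :=
        SimpleGraph.lineGraph_adj_iff_exists.mpr ⟨hfne, w, hu, hv⟩
      exact f.map_rel_iff.mp this
    · intro u v hadj
      have hL : H.lineGraph.Adj (f u) (f v) := f.map_rel_iff.mpr hadj
      obtain ⟨hfne, w, hw1, hw2⟩ := SimpleGraph.lineGraph_adj_iff_exists.mp hL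
      refine ⟨{v' : V | w ∈ ((f v' : H.edgeSet) : Sym2 W)}, ⟨⟨w, rfl⟩, hw1, hw2⟩, ?_⟩
      rintro C ⟨⟨w', rfl⟩, hu', hv'⟩
      have hww' : w' = w := by
        by_contra hne'
        have h1 : ((f u : H.edgeSet) : Sym2 W) = s(w', w) :=
          (Sym2.mem_and_mem_iff hne').mp ⟨hu', hw1⟩
        have h2 : ((f v : H.edgeSet) : Sym2 W) = s(w', w) :=
          (Sym2.mem_and_mem_iff hne').mp ⟨hv', hw2⟩
        exact hfne (Subtype.ext (h1.trans h2.symm))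
      rw [hww']
    · rintro v C₁ ⟨w₁, rfl⟩ C₂ ⟨w₂, rfl⟩ C₃ ⟨w₃, rfl⟩ h1 h2 h3
      rcases sym2_three _ w₁ w₂ w₃ h1 h2 h3 with h | h | h
      · left; rw [h]
      · right; left; rw [h]
      · right; right; rw [h]
  · rintro ⟨P, hP⟩
    exact ⟨Set V ⊕ V × Fin 2, KrauszAux.H P, ⟨KrauszAux.krauszIso P hP⟩⟩
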